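/- Let v and u be K-adjacent x-vertices (some K-edge joins v and u), and suppose a(v, K, K, 0) > R, a(v, I, K, 0) > R, a(u, K, K, 0) > R, a(u, I, K, 0) > R, A(v, I) < R, and A(u, I) < R. Then for every feasible solution x*, the output values of the local algorithm satisfy x_v + x_u ≥ ω(x*). -/

import Mathlib

/-- An undirected multigraph with two-coloured vertices and two-coloured edges.
`isX v` means `v` is an x-vertex (otherwise `v` is a 0-vertex);
`isK e` means `e` is a K-edge (otherwise `e` is an I-edge). -/
structure ColoredMultigraph (V : Type) (E : Type) where
  ends : E → Sym2 V
  isX : V → Prop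
  isK : E → Prop

namespace ColoredMultigraph

variable {V E : Type} (G : ColoredMultigraph V E)

/-- Edge `e` joins vertices `a` and `b`. -/
def Joins (e : E) (a b : V) : Prop := G.ends e = s(a, b)

/-- `AltWalk G v c c' u n` : there is an alternating walk from `v` to `u` whose
first edge has colour `c` (`true` = K-edge, `false` = I-edge), whose last edge
has colour `c'`, and whose K-length (number of K-edges) is `n`. -/
inductive AltWalk : V → Bool → Bool → V → ℕ → Prop
  | single (e : E) (a b : V) (c : Bool) :
      G.Joins e a b → (G.isK e ↔ c = true) → AltWalk a c c b (cond c 1 0)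
  | cons (e : E) (a b : V) (c c' : Bool) (u : V) (n : ℕ) :
      G.Joins e a b → (G.isK e ↔ c = true) → AltWalk b (!c) c' u n →
      AltWalk a c c' u (cond c 1 0 + n)

/-- `a(v,X,Y,0)` : the minimum K-length of a `(v,X,Y,0)`-walk, that is, a walk
from `v` to some 0-vertex starting with an X-edge and ending with a Y-edge
(`∞` if no such walk exists). -/
noncomputable def walkInf (v : V) (X Y : Bool) : ℕ∞ :=
  sInf {n : ℕ∞ | ∃ m : ℕ, n = m ∧ ∃ u, G.AltWalk v X Y u m ∧ ¬ G.isX u}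

/-- `A(v,X)` : the maximum K-length of an alternating walk starting at `v` with
an X-edge (`∞` if walks of arbitrarily large K-length exist). -/
noncomputable def walkSup (v : V) (X : Bool) : ℕ∞ :=
  sSup {n : ℕ∞ | ∃ m : ℕ, n = m ∧ ∃ Y u, G.AltWalk v X Y u m}

/-- `b(v,X,Y,0) = min {a(v,X,Y,0), R}`. -/
noncomputable def bnd (R : ℕ) (v : V) (X Y : Bool) : ℕ∞ :=
  min (G.walkInf v X Y) (R : ℕ∞)

/-- `B(v,X) = min {A(v,X), R}`. -/
noncomputable def Bnd (R : ℕ) (v : V) (X : Bool) : ℕ∞ :=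
  min (G.walkSup v X) (R : ℕ∞)

/-- The value `p_v` chosen by the local algorithm:
`p_v = b(v,I,K,0)` if `a(v,K,K,0) ≤ R`, and
`p_v = min {b(v,I,K,0), B(v,K)}` otherwise. -/
noncomputable def pv (R : ℕ) (v : V) : ℕ∞ :=
  if G.walkInf v true true ≤ (R : ℕ∞) then G.bnd R v false true
  else min (G.bnd R v false true) (G.Bnd R v true)

/-- The value `q_v` chosen by the local algorithm:
`q_v = b(v,K,K,0)` if `a(v,I,K,0) ≤ R`, and
`q_v = min {b(v,K,K,0), B(v,I)}` otherwise. -/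
noncomputable def qv (R : ℕ) (v : V) : ℕ∞ :=
  if G.walkInf v false true ≤ (R : ℕ∞) then G.bnd R v true true
  else min (G.bnd R v true true) (G.Bnd R v false)

open Classical in
/-- The output value of the local algorithm: `p_v / (p_v + q_v)` at an x-vertex
`v`, and `0` at a 0-vertex. -/
noncomputable def xval (R : ℕ) (v : V) : ℝ :=
  if G.isX v then
    ((G.pv R v).toNat : ℝ) / (((G.pv R v).toNat : ℝ) + ((G.qv R v).toNat : ℝ))
  else 0

/-- Structural assumptions: every x-vertex is incident to at least one K-edge
and at least one I-edge, every 0-vertex is incident to exactly one edge, and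
every edge has at least one x-vertex endpoint. -/
def WellFormed : Prop :=
  (∀ v, G.isX v → ∃ e, v ∈ G.ends e ∧ G.isK e) ∧
  (∀ v, G.isX v → ∃ e, v ∈ G.ends e ∧ ¬ G.isK e) ∧
  (∀ v, ¬ G.isX v → ∃! e, v ∈ G.ends e) ∧
  (∀ e a b, G.Joins e a b → G.isX a ∨ G.isX b)

/-- A feasible solution: nonnegative, zero at 0-vertices, and satisfying
`x a + x b ≤ 1` for every I-edge `{a, b}`. -/
def Feasible (x : V → ℝ) : Prop :=
  (∀ a, 0 ≤ x a) ∧ (∀ a, ¬ G.isX a → x a = 0) ∧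
  (∀ e a b, G.Joins e a b → ¬ G.isK e → x a + x b ≤ 1)

/-- The utility `ω(x)` of a solution: the minimum (infimum) over K-edges
`{a, b}` of `x a + x b`. -/
noncomputable def utility (x : V → ℝ) : ℝ :=
  sInf {r : ℝ | ∃ e a b, G.Joins e a b ∧ G.isK e ∧ r = x a + x b}

end ColoredMultigraph


namespace ColoredMultigraph

variable {V E : Type} {G : ColoredMultigraph V E}

lemma Joins.symm {e : E} {a b : V} (h : G.Joins e a b) : G.Joins e b a := by
  unfold ColoredMultigraph.Joins at *
  rw [h, Sym2.eq_swap]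

lemma AltWalk.snoc {a : V} {c c' : Bool} {b : V} {n : ℕ}
    (h : G.AltWalk a c c' b n) (e : E) (w : V)
    (hj : G.Joins e b w) (hk : G.isK e ↔ (!c') = true) :
    G.AltWalk a c (!c') w (n + cond (!c') 1 0) := by
  induction h with
  | single e0 a0 b0 c0 hj0 hk0 =>
      exact AltWalk.cons e0 a0 b0 c0 (!c0) w _ hj0 hk0
        (AltWalk.single e b0 w (!c0) hj hk)
  | cons e0 a0 b0 c0 c'' u0 n0 hj0 hk0 ht ih =>
      have := AltWalk.cons e0 a0 b0 c0 (!c'') w _ hj0 hk0 (ih hj hk)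
      rwa [← add_assoc] at this

lemma mem_walkSupSet {v : V} {X Y : Bool} {w : V} {m : ℕ}
    (h : G.AltWalk v X Y w m) : (m : ℕ∞) ≤ G.walkSup v X := by
  rw [ColoredMultigraph.walkSup]
  exact le_sSup ⟨m, rfl, Y, w, h⟩

lemma walkInf_le {v : V} {X Y : Bool} {w : V} {m : ℕ}
    (h : G.AltWalk v X Y w m) (hw : ¬ G.isX w) : G.walkInf v X Y ≤ (m : ℕ∞) := by
  rw [ColoredMultigraph.walkInf]
  exact sInf_le ⟨m, rfl, w, h, hw⟩

lemma walkSup_attained {v : V} {X : Bool} (R : ℕ)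
    (hne : ∃ m : ℕ, ∃ Y w, G.AltWalk v X Y w m)
    (hlt : G.walkSup v X < (R : ℕ∞)) :
    ∃ m : ℕ, (m : ℕ∞) = G.walkSup v X ∧ ∃ Y w, G.AltWalk v X Y w m := by
  classical
  set T := {m : ℕ | ∃ Y w, G.AltWalk v X Y w m} with hT
  have hbdd : BddAbove T := by
    refine ⟨R, fun m hm => ?_⟩
    obtain ⟨Y, w, hw⟩ := hm
    have h1 : (m : ℕ∞) ≤ G.walkSup v X := mem_walkSupSet hw
    exact_mod_cast h1.trans hlt.le
  have hTne : T.Nonempty := hne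
  have hmem := Nat.sSup_mem hTne hbdd
  obtain ⟨Y0, w0, hw0⟩ := hmem
  refine ⟨sSup T, le_antisymm (mem_walkSupSet hw0) ?_, Y0, w0, hw0⟩
  rw [ColoredMultigraph.walkSup]
  refine sSup_le ?_
  rintro n ⟨m, rfl, Y1, w1, hw1⟩
  exact_mod_cast le_csSup hbdd ⟨Y1, w1, hw1⟩

lemma utility_le (x : V → ℝ) (hx : G.Feasible x) {e : E} {a b : V}
    (hj : G.Joins e a b) (hk : G.isK e) : G.utility x ≤ x a + x b := by
  have hbdd : BddBelow {r : ℝ | ∃ e a b, G.Joins e a b ∧ G.isK e ∧ r = x a + x b} := by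
    refine ⟨0, ?_⟩
    rintro r ⟨e, a, b, -, -, rfl⟩
    exact add_nonneg (hx.1 a) (hx.1 b)
  exact csInf_le hbdd ⟨e, a, b, hj, hk, rfl⟩

lemma walk_bound (x : V → ℝ) (hx : G.Feasible x)
    {a : V} {c c' : Bool} {b : V} {n : ℕ} (h : G.AltWalk a c c' b n) :
    (if c then -x a else x a) + (if c' then -x b else x b) ≤
      ((if c then 0 else 1) + (if c' then 0 else 1) + n - 1 : ℝ) - n * G.utility x := by
  induction h with
  | single e a b c hj hk =>
      cases c with
      | false =>
          have h1 := hx.2.2 e a b hj (by simp at hk; simp [hk])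
          simp only [Bool.cond_false, if_neg Bool.false_ne_true]
          push_cast
          linarith
      | true =>
          have h1 := utility_le x hx hj (hk.mpr rfl)
          simp only [Bool.cond_true, if_pos rfl]
          push_cast
          linarith
  | cons e a b c c' u n hj hk ht ih =>
      cases c with
      | false =>
          have h1 := hx.2.2 e a b hj (by simp at hk; simp [hk])
          simp only [Bool.not_false] at ih
          cases c' with
          | false =>
              simp only [Bool.cond_false, if_neg Bool.false_ne_true, if_pos rfl] at ih ⊢
              push_cast at ih ⊢
              linarith
          | true =>
              simp only [Bool.cond_false, if_neg Bool.false_ne_true, if_pos rfl] at ih ⊢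
              push_cast at ih ⊢
              linarith
      | true =>
          have h1 := utility_le x hx hj (hk.mpr rfl)
          simp only [Bool.not_true] at ih
          cases c' with
          | false =>
              simp only [Bool.cond_true, if_neg Bool.false_ne_true, if_pos rfl] at ih ⊢
              push_cast at ih ⊢
              linarith
          | true =>
              simp only [Bool.cond_true, if_neg Bool.false_ne_true, if_pos rfl] at ih ⊢
              push_cast at ih ⊢
              linarith

/-- A maximal alternating walk from `v` starting with an I-edge can be chosen
to end at a 0-vertex with an I-edge. -/
lemma exists_II_walk (hG : G.WellFormed) {v : V} (hv : G.isX v) (R : ℕ)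
    (hIK : (R : ℕ∞) < G.walkInf v false true)
    (hA : G.walkSup v false < (R : ℕ∞)) :
    ∃ m : ℕ, (m : ℕ∞) = G.walkSup v false ∧
      ∃ w, G.AltWalk v false false w m ∧ ¬ G.isX w := by
  classical
  obtain ⟨e, he, hke⟩ := hG.2.1 v hv
  obtain ⟨b0, hb0⟩ := Sym2.mem_iff_exists.mp he
  have w0 : G.AltWalk v false false b0 0 :=
    AltWalk.single e v b0 false hb0 (by simp [hke])
  obtain ⟨k, hk, Y, w, hw⟩ := walkSup_attained R ⟨0, false, b0, w0⟩ hA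
  have hkR : (k : ℕ∞) < (R : ℕ∞) := hk ▸ hA
  have hmax : ∀ (m : ℕ) (Y : Bool) (w : V), G.AltWalk v false Y w m → m ≤ k := by
    intro m Y w hwalk
    have h1 : (m : ℕ∞) ≤ G.walkSup v false := mem_walkSupSet hwalk
    rw [← hk] at h1
    exact_mod_cast h1
  cases Y with
  | true =>
      by_cases hxw : G.isX w
      · obtain ⟨e1, he1, hke1⟩ := hG.2.1 w hxw
        obtain ⟨w1, hw1⟩ := Sym2.mem_iff_exists.mp he1
        have hw' : G.AltWalk v false false w1 k := by
          have := hw.snoc e1 w1 hw1 (by simp [hke1])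
          simpa using this
        by_cases hxw1 : G.isX w1
        · obtain ⟨e2, he2, hke2⟩ := hG.1 w1 hxw1
          obtain ⟨w2, hw2⟩ := Sym2.mem_iff_exists.mp he2
          have h2 : G.AltWalk v false true w2 (k + 1) := by
            have := hw'.snoc e2 w2 hw2 (by simp [hke2])
            simpa using this
          have := hmax (k + 1) true w2 h2
          omega
        · exact ⟨k, hk, w1, hw', hxw1⟩
      · exact absurd hkR (not_lt.mpr ((hIK.trans_le (walkInf_le hw hxw)).le))
  | false =>
      by_cases hxw : G.isX w
      · obtain ⟨e2, he2, hke2⟩ := hG.1 w hxw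
        obtain ⟨w2, hw2⟩ := Sym2.mem_iff_exists.mp he2
        have h2 : G.AltWalk v false true w2 (k + 1) := by
          have := hw.snoc e2 w2 hw2 (by simp [hke2])
          simpa using this
        have := hmax (k + 1) true w2 h2
        omega
      · exact ⟨k, hk, w, hw, hxw⟩

end ColoredMultigraph

/-- Let `v` and `u` be K-adjacent x-vertices, and suppose
`a(v,K,K,0) > R`, `a(v,I,K,0) > R`, `a(u,K,K,0) > R`, `a(u,I,K,0) > R`,
`A(v,I) < R`, and `A(u,I) < R`. Then for every feasible solution `x*`, the
output values of the local algorithm satisfy `x_v + x_u ≥ ω(x*)`. -/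
theorem stmt_18 {V E : Type} (G : ColoredMultigraph V E) (hG : G.WellFormed)
    (R : ℕ) (hR : 1 ≤ R) (v u : V) (hv : G.isX v) (hu : G.isX u)
    (hadj : ∃ e, G.Joins e v u ∧ G.isK e)
    (hvKK : (R : ℕ∞) < G.walkInf v true true)
    (hvIK : (R : ℕ∞) < G.walkInf v false true)
    (huKK : (R : ℕ∞) < G.walkInf u true true)
    (huIK : (R : ℕ∞) < G.walkInf u false true)
    (hAvI : G.walkSup v false < (R : ℕ∞))
    (hAuI : G.walkSup u false < (R : ℕ∞))
    (xstar : V → ℝ) (hxstar : G.Feasible xstar) :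
    G.utility xstar ≤ G.xval R v + G.xval R u := by
  classical
  obtain ⟨e0, he0, hke0⟩ := hadj
  obtain ⟨kv, hkv, zv, hwv, hzv⟩ := ColoredMultigraph.exists_II_walk hG hv R hvIK hAvI
  obtain ⟨ku, hku, zu, hwu, hzu⟩ := ColoredMultigraph.exists_II_walk hG hu R huIK hAuI
  have hkuR : (ku : ℕ∞) < (R : ℕ∞) := by rw [hku]; exact hAuI
  have hkvR : (kv : ℕ∞) < (R : ℕ∞) := by rw [hkv]; exact hAvI
  have hkuR' : ku < R := by exact_mod_cast hkuR
  have hkvR' : kv < R := by exact_mod_cast hkvR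
  -- lower bounds on A(v,K), A(u,K) via the K-edge e0
  have hSv : ((ku + 1 : ℕ) : ℕ∞) ≤ G.walkSup v true := by
    have hwalk : G.AltWalk v true false zu (1 + ku) :=
      ColoredMultigraph.AltWalk.cons e0 v u true false zu ku he0 (iff_of_true hke0 rfl) hwu
    have h1 := ColoredMultigraph.mem_walkSupSet hwalk
    have h2 : ku + 1 = 1 + ku := by omega
    rw [h2]
    exact_mod_cast h1
  have hSu : ((kv + 1 : ℕ) : ℕ∞) ≤ G.walkSup u true := by
    have hwalk : G.AltWalk u true false zv (1 + kv) :=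
      ColoredMultigraph.AltWalk.cons e0 u v true false zv kv he0.symm (iff_of_true hke0 rfl) hwv
    have h1 := ColoredMultigraph.mem_walkSupSet hwalk
    have h2 : kv + 1 = 1 + kv := by omega
    rw [h2]
    exact_mod_cast h1
  -- compute q_v, q_u
  have hqv : G.qv R v = (kv : ℕ∞) := by
    rw [ColoredMultigraph.qv, if_neg (not_le.mpr hvIK)]
    unfold ColoredMultigraph.bnd ColoredMultigraph.Bnd
    rw [min_eq_right hvKK.le, min_eq_left hAvI.le, ← hkv, min_eq_right hkvR.le]
  have hqu : G.qv R u = (ku : ℕ∞) := by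
    rw [ColoredMultigraph.qv, if_neg (not_le.mpr huIK)]
    unfold ColoredMultigraph.bnd ColoredMultigraph.Bnd
    rw [min_eq_right huKK.le, min_eq_left hAuI.le, ← hku, min_eq_right hkuR.le]
  -- compute p_v, p_u
  have hpv : G.pv R v = min (G.walkSup v true) (R : ℕ∞) := by
    rw [ColoredMultigraph.pv, if_neg (not_le.mpr hvKK)]
    unfold ColoredMultigraph.bnd ColoredMultigraph.Bnd
    rw [min_eq_right hvIK.le, min_comm (G.walkSup v true) ((R : ℕ∞)), ← min_assoc,
      min_self, min_comm]
  have hpu : G.pv R u = min (G.walkSup u true) (R : ℕ∞) := by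
    rw [ColoredMultigraph.pv, if_neg (not_le.mpr huKK)]
    unfold ColoredMultigraph.bnd ColoredMultigraph.Bnd
    rw [min_eq_right huIK.le, min_comm (G.walkSup u true) ((R : ℕ∞)), ← min_assoc,
      min_self, min_comm]
  have hpv_ge : ((ku + 1 : ℕ) : ℕ∞) ≤ G.pv R v := by
    rw [hpv]
    exact le_min hSv (by exact_mod_cast Nat.succ_le_of_lt hkuR')
  have hpu_ge : ((kv + 1 : ℕ) : ℕ∞) ≤ G.pv R u := by
    rw [hpu]
    exact le_min hSu (by exact_mod_cast Nat.succ_le_of_lt hkvR')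
  have hpv_ne : G.pv R v ≠ ⊤ := by
    rw [hpv]
    exact ((min_le_right _ _).trans_lt (ENat.coe_lt_top R)).ne
  have hpu_ne : G.pv R u ≠ ⊤ := by
    rw [hpu]
    exact ((min_le_right _ _).trans_lt (ENat.coe_lt_top R)).ne
  have hPge : ku + 1 ≤ (G.pv R v).toNat := by
    have hc := ENat.coe_toNat hpv_ne
    rw [← hc] at hpv_ge
    exact_mod_cast hpv_ge
  have hPge' : kv + 1 ≤ (G.pv R u).toNat := by
    have hc := ENat.coe_toNat hpu_ne
    rw [← hc] at hpu_ge
    exact_mod_cast hpu_ge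
  have hQv : (G.qv R v).toNat = kv := by rw [hqv]; simp
  have hQu : (G.qv R u).toNat = ku := by rw [hqu]; simp
  -- real-number bounds from the walks
  have hωvu : G.utility xstar ≤ xstar v + xstar u :=
    ColoredMultigraph.utility_le xstar hxstar he0 hke0
  have hxv_le : xstar v ≤ (kv : ℝ) + 1 - kv * G.utility xstar := by
    have hb := ColoredMultigraph.walk_bound xstar hxstar hwv
    have hz : xstar zv = 0 := hxstar.2.1 zv hzv
    simp only [if_neg Bool.false_ne_true] at hb
    rw [hz] at hb
    linarith
  have hxu_le : xstar u ≤ (ku : ℝ) + 1 - ku * G.utility xstar := by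
    have hb := ColoredMultigraph.walk_bound xstar hxstar hwu
    have hz : xstar zu = 0 := hxstar.2.1 zu hzu
    simp only [if_neg Bool.false_ne_true] at hb
    rw [hz] at hb
    linarith
  set ω := G.utility xstar with hω
  have hω1 : ω * ((kv : ℝ) + ku + 1) ≤ (kv : ℝ) + ku + 2 := by nlinarith
  -- final arithmetic
  rw [ColoredMultigraph.xval, ColoredMultigraph.xval, if_pos hv, if_pos hu, hQv, hQu]
  set A := ((G.pv R v).toNat : ℝ) with hA
  set B := ((G.pv R u).toNat : ℝ) with hB
  have ha : (0 : ℝ) ≤ (kv : ℝ) := Nat.cast_nonneg kv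
  have hb : (0 : ℝ) ≤ (ku : ℝ) := Nat.cast_nonneg ku
  have hAge : (ku : ℝ) + 1 ≤ A := by rw [hA]; exact_mod_cast hPge
  have hBge : (kv : ℝ) + 1 ≤ B := by rw [hB]; exact_mod_cast hPge'
  have d1 : (0 : ℝ) < A + kv := by linarith
  have d2 : (0 : ℝ) < B + ku := by linarith
  have d3 : (0 : ℝ) < (kv : ℝ) + ku + 1 := by linarith
  have h1 : ((ku : ℝ) + 1) / ((kv : ℝ) + ku + 1) ≤ A / (A + kv) := by
    rw [div_le_div_iff₀ d3 d1]
    nlinarith [mul_nonneg (sub_nonneg.mpr hAge) ha]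
  have h2 : ((kv : ℝ) + 1) / ((kv : ℝ) + ku + 1) ≤ B / (B + ku) := by
    rw [div_le_div_iff₀ d3 d2]
    nlinarith [mul_nonneg (sub_nonneg.mpr hBge) hb]
  have h3 : ω ≤ ((ku : ℝ) + 1) / ((kv : ℝ) + ku + 1) + ((kv : ℝ) + 1) / ((kv : ℝ) + ku + 1) := by
    rw [← add_div, le_div_iff₀ d3]
    nlinarith
  linarith
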